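/- arXiv:1803.07928 — 6 statements merged into one kernel-verified Lean document; each statement's English description precedes it below -/
import Mathlib

section
/- Suppose the digraph G_p' (constructed from digraph G on n vertices by the two-vertex-cycle gadget, with single input u connected to every v_i^1) admits a spanning subgraph that is a stem u → v_{s_1}^1 → v_{s_1}^2 → v_{s_2}^1 → ... → v_{s_n}^1 → v_{s_n}^2 covering all 2n state vertices, where s is a permutation of {1,...,n}. Then v_{s_1} → v_{s_2} → ... → v_{s_n} is a Hamiltonian path in G. -/
/-- A Hamiltonian path in a digraph with adjacency relation `adj`. -/
def IsHamPath {V : Type*} [Fintype V] (adj : V → V → Prop) (l : List V) : Prop :=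
  l.Nodup ∧ (∀ v, v ∈ l) ∧ l.Chain' adj

/-- The auxiliary digraph `G_p'` built from a digraph `E` on `Fin n`:
`none` is the input vertex `u`, `some (i, false)` is `v_i^1` and
`some (i, true)` is `v_i^2`; edges `u → v_i^1`, `v_i^1 → v_i^2`,
`v_i^2 → v_i^1`, and `v_i^2 → v_j^1` whenever `E i j`. -/
def auxAdj {n : ℕ} (E : Fin n → Fin n → Prop) :
    Option (Fin n × Bool) → Option (Fin n × Bool) → Prop
  | none, some (_, false) => True
  | some (i, false), some (j, true) => i = j
  | some (i, true), some (j, false) => i = j ∨ E i j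
  | _, _ => False

/-- The stem `u → v_{s 0}^1 → v_{s 0}^2 → v_{s 1}^1 → ⋯ → v_{s (n-1)}^1 → v_{s (n-1)}^2`
determined by a permutation `s` of `{1,…,n}`. -/
def stem {n : ℕ} (s : Equiv.Perm (Fin n)) : List (Option (Fin n × Bool)) :=
  none :: ((List.ofFn fun i : Fin n =>
    [some ((s i, false) : Fin n × Bool), some ((s i, true) : Fin n × Bool)]).flatten)

lemma chainAux {n : ℕ} (E : Fin n → Fin n → Prop) :
    ∀ l : List (Fin n),
      List.Chain' (auxAdj E)
        ((l.map fun i => [some ((i, false) : Fin n × Bool), some ((i, true) : Fin n × Bool)]).flatten) →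
      List.Chain' (fun i j => i = j ∨ E i j) l
  | [], _ => List.isChain_nil
  | [_], _ => List.isChain_singleton _
  | a :: b :: t, h => by
      simp only [List.map_cons, List.flatten_cons, List.cons_append, List.nil_append,
        List.Chain', List.isChain_cons_cons] at h
      obtain ⟨_, hab, hrest⟩ := h
      exact List.isChain_cons_cons.2 ⟨hab, chainAux E (b :: t) (by
        simpa [List.Chain'] using hrest)⟩

/-- If the stem determined by the permutation `s` is a (spanning) directed
path of the auxiliary digraph `G_p'`, then `v_{s 1} → ⋯ → v_{s n}` is a
Hamiltonian path of `G`. -/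
theorem stmt3 {n : ℕ} (E : Fin n → Fin n → Prop) (s : Equiv.Perm (Fin n))
    (hstem : (stem s).Chain' (auxAdj E)) :
    IsHamPath E (List.ofFn fun i => s i) := by
  have hmap : (List.ofFn fun i : Fin n =>
      [some ((s i, false) : Fin n × Bool), some ((s i, true) : Fin n × Bool)])
      = (List.ofFn fun i : Fin n => s i).map
        (fun i => [some ((i, false) : Fin n × Bool), some ((i, true) : Fin n × Bool)]) := by
    simp [List.map_ofFn, Function.comp]
    rfl
  have hchain : List.Chain' (fun i j => i = j ∨ E i j) (List.ofFn fun i => s i) := by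
    apply chainAux
    rw [← hmap]
    exact (List.isChain_cons.1 hstem).2
  refine ⟨?_, ?_, ?_⟩
  · exact (List.nodup_ofFn).2 s.injective
  · intro v
    rw [List.mem_ofFn]
    exact ⟨s.symm v, s.apply_symm_apply v⟩
  · unfold List.Chain' at hchain ⊢
    rw [List.isChain_iff_getElem] at hchain ⊢
    intro i hi
    have := hchain i hi
    rcases this with h | h
    · exfalso
      simp only [List.get_eq_getElem, List.getElem_ofFn] at h
      have h2 := s.injective h
      simp [Fin.ext_iff] at h2
    · exact h
end

section
/- Let (A,B) be a structured pair whose associated system digraph is D(A,B) and system bipartite graph is B(A,B). Assign a positive cost to each edge. The minimum total cost of an edge set whose removal makes (A,B) structurally uncontrollable equals the minimum of: (i) the minimum cost of an edge set whose removal makes some state vertex unreachable from the inputs in D(A,B), and (ii) the minimum cost of an edge set whose removal decreases the maximum matching number of B(A,B) (i.e., a minimum cost 1-blocker). -/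
/-- Adjacency of the system digraph `D(A,B)` given by a set `EA` of state
edges and a set `EB` of input edges. -/
def sysAdj {n q : ℕ} (EA : Finset (Fin n × Fin n)) (EB : Finset (Fin q × Fin n)) :
    (Fin q ⊕ Fin n) → (Fin q ⊕ Fin n) → Prop
  | Sum.inl u, Sum.inr x => (u, x) ∈ EB
  | Sum.inr x, Sum.inr y => (x, y) ∈ EA
  | _, _ => False

/-- Every state vertex is reachable from some input vertex in `D(A,B)`. -/
def InputReachable {n q : ℕ} (EA : Finset (Fin n × Fin n))
    (EB : Finset (Fin q × Fin n)) : Prop :=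
  ∀ x : Fin n, ∃ u : Fin q,
    Relation.ReflTransGen (sysAdj EA EB) (Sum.inl u) (Sum.inr x)

/-- The system bipartite graph `B(A,B)`: left vertices `U ⊕ X`, right
vertices `X`, with the edges of `D(A,B)`. -/
def sysBip {n q : ℕ} (EA : Finset (Fin n × Fin n)) (EB : Finset (Fin q × Fin n)) :
    Finset ((Fin q ⊕ Fin n) × Fin n) :=
  EB.image (fun e => (Sum.inl e.1, e.2)) ∪ EA.image (fun e => (Sum.inr e.1, e.2))

/-- There is a matching of `B(A,B)` saturating all right (state) vertices. -/
def SaturatingMatching {n q : ℕ} (EA : Finset (Fin n × Fin n))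
    (EB : Finset (Fin q × Fin n)) : Prop :=
  ∃ f : Fin n → (Fin q ⊕ Fin n), Function.Injective f ∧
    ∀ x : Fin n, (f x, x) ∈ sysBip EA EB

/-- Structural controllability of the pair described by the edge sets
`(EA, EB)` (Lin's theorem: input-reachability + saturating matching). -/
def StructCtrb {n q : ℕ} (EA : Finset (Fin n × Fin n))
    (EB : Finset (Fin q × Fin n)) : Prop :=
  InputReachable EA EB ∧ SaturatingMatching EA EB

/-- `M` is a matching of the bipartite edge set `Eb`. -/
def IsMatching {L R : Type*} (Eb M : Finset (L × R)) : Prop :=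
  M ⊆ Eb ∧ ∀ e ∈ M, ∀ f ∈ M, e ≠ f → e.1 ≠ f.1 ∧ e.2 ≠ f.2

/-- The maximum matching number of a bipartite edge set. -/
noncomputable def matchNum {L R : Type*} (Eb : Finset (L × R)) : ℕ :=
  sSup {k | ∃ M : Finset (L × R), IsMatching Eb M ∧ M.card = k}

-- auxiliary lemmas

lemma matching_card_le {n q : ℕ} {Eb M : Finset ((Fin q ⊕ Fin n) × Fin n)}
    (hM : IsMatching Eb M) : M.card ≤ n := by
  have hinj : Set.InjOn Prod.snd (M : Set ((Fin q ⊕ Fin n) × Fin n)) := by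
    intro e he f hf h
    by_contra hne
    exact (hM.2 e he f hf hne).2 h
  calc M.card = (M.image Prod.snd).card := (Finset.card_image_of_injOn hinj).symm
    _ ≤ (Finset.univ : Finset (Fin n)).card := Finset.card_le_card (Finset.subset_univ _)
    _ = n := by simp

lemma matchNum_bdd {n q : ℕ} (Eb : Finset ((Fin q ⊕ Fin n) × Fin n)) :
    BddAbove {k | ∃ M : Finset ((Fin q ⊕ Fin n) × Fin n), IsMatching Eb M ∧ M.card = k} :=
  ⟨n, by rintro k ⟨M, hM, rfl⟩; exact matching_card_le hM⟩

lemma zero_mem_matchSet {L R : Type*} (Eb : Finset (L × R)) :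
    0 ∈ {k | ∃ M : Finset (L × R), IsMatching Eb M ∧ M.card = k} :=
  ⟨∅, ⟨Finset.empty_subset _, fun e he => absurd he (Finset.notMem_empty e)⟩, rfl⟩

lemma matchNum_le {n q : ℕ} (Eb : Finset ((Fin q ⊕ Fin n) × Fin n)) :
    matchNum Eb ≤ n := by
  apply csSup_le ⟨0, zero_mem_matchSet Eb⟩
  rintro k ⟨M, hM, rfl⟩
  exact matching_card_le hM

lemma matchNum_empty {n q : ℕ} : matchNum (∅ : Finset ((Fin q ⊕ Fin n) × Fin n)) = 0 := by
  unfold matchNum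
  have h : {k | ∃ M : Finset ((Fin q ⊕ Fin n) × Fin n), IsMatching ∅ M ∧ M.card = k} = {0} := by
    ext k
    simp only [Set.mem_setOf_eq, Set.mem_singleton_iff]
    constructor
    · rintro ⟨M, ⟨hsub, _⟩, rfl⟩
      simp [Finset.subset_empty.mp hsub]
    · rintro rfl
      exact zero_mem_matchSet _
  rw [h, csSup_singleton]

lemma sat_iff {n q : ℕ} (EA : Finset (Fin n × Fin n)) (EB : Finset (Fin q × Fin n)) :
    SaturatingMatching EA EB ↔ matchNum (sysBip EA EB) = n := by
  constructor
  · rintro ⟨f, hinj, hmem⟩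
    set M : Finset ((Fin q ⊕ Fin n) × Fin n) := Finset.univ.image (fun x => (f x, x)) with hMdef
    have hMm : IsMatching (sysBip EA EB) M := by
      constructor
      · intro e he
        simp only [hMdef, Finset.mem_image, Finset.mem_univ, true_and] at he
        obtain ⟨x, rfl⟩ := he
        exact hmem x
      · intro e he f' hf' hne
        simp only [hMdef, Finset.mem_image, Finset.mem_univ, true_and] at he hf'
        obtain ⟨x, rfl⟩ := he
        obtain ⟨y, rfl⟩ := hf'
        have hxy : x ≠ y := fun h => hne (by rw [h])
        exact ⟨fun h => hxy (hinj h), hxy⟩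
    have hcard : M.card = n := by
      rw [hMdef, Finset.card_image_of_injective _ (fun a b h => by simpa using congrArg Prod.snd h)]
      simp
    exact le_antisymm (matchNum_le _) (le_csSup (matchNum_bdd _) ⟨M, hMm, hcard⟩)
  · intro h
    have hne : Set.Nonempty {k | ∃ M : Finset ((Fin q ⊕ Fin n) × Fin n),
        IsMatching (sysBip EA EB) M ∧ M.card = k} := ⟨0, zero_mem_matchSet _⟩
    obtain ⟨M, hM, hcard⟩ := Nat.sSup_mem hne (matchNum_bdd _)
    unfold matchNum at h
    rw [h] at hcard
    have hinjOn : Set.InjOn Prod.snd (M : Set ((Fin q ⊕ Fin n) × Fin n)) := by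
      intro e he f hf hsnd
      by_contra hnef
      exact (hM.2 e he f hf hnef).2 hsnd
    have himg : M.image Prod.snd = Finset.univ := by
      apply Finset.eq_univ_of_card
      rw [Finset.card_image_of_injOn hinjOn, hcard]
      simp
    have hsurj : ∀ x : Fin n, ∃ e, e ∈ M ∧ e.2 = x := by
      intro x
      have hx : x ∈ M.image Prod.snd := himg ▸ Finset.mem_univ x
      simpa using hx
    choose g hg1 hg2 using hsurj
    refine ⟨fun x => (g x).1, ?_, ?_⟩
    · intro a b hab
      by_cases hgg : g a = g b
      · rw [← hg2 a, ← hg2 b, hgg]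
      · exact absurd hab (hM.2 _ (hg1 a) _ (hg1 b) hgg).1
    · intro x
      have : ((g x).1, x) = g x := Prod.ext rfl (hg2 x).symm
      rw [this]
      exact hM.1 (hg1 x)

lemma sysAdj_empty {n q : ℕ} : ∀ a b, ¬ sysAdj (∅ : Finset (Fin n × Fin n))
    (∅ : Finset (Fin q × Fin n)) a b := by
  rintro (u | x) (v | y) h <;> simp [sysAdj] at h

lemma not_IR_empty {n q : ℕ} (hn : 0 < n) :
    ¬ InputReachable (∅ : Finset (Fin n × Fin n)) (∅ : Finset (Fin q × Fin n)) := by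
  intro h
  obtain ⟨u, hu⟩ := h ⟨0, hn⟩
  have key : ∀ {a b : Fin q ⊕ Fin n}, Relation.ReflTransGen
      (sysAdj (∅ : Finset (Fin n × Fin n)) (∅ : Finset (Fin q × Fin n))) a b → a = b := by
    intro a b hab
    induction hab with
    | refl => rfl
    | tail _ h2 _ => exact absurd h2 (sysAdj_empty _ _)
  exact absurd (key hu) (by simp)

/-- The minimum total cost of an edge set whose removal destroys structural
controllability equals the minimum of (i) the minimum cost of an edge set
whose removal destroys input-reachability of some state in `D(A,B)` and
(ii) the minimum cost of a `1`-blocker of `B(A,B)`. -/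
theorem stmt4 {n q : ℕ} (EA : Finset (Fin n × Fin n)) (EB : Finset (Fin q × Fin n))
    (cA : Fin n × Fin n → ℝ) (cB : Fin q × Fin n → ℝ)
    (hcA : ∀ e ∈ EA, 0 < cA e) (hcB : ∀ e ∈ EB, 0 < cB e)
    (hctrb : StructCtrb EA EB) :
    sInf {r : ℝ | ∃ FA ⊆ EA, ∃ FB ⊆ EB,
        ¬ StructCtrb (EA \ FA) (EB \ FB) ∧
        r = ∑ e ∈ FA, cA e + ∑ e ∈ FB, cB e}
      = min
        (sInf {r : ℝ | ∃ FA ⊆ EA, ∃ FB ⊆ EB,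
          ¬ InputReachable (EA \ FA) (EB \ FB) ∧
          r = ∑ e ∈ FA, cA e + ∑ e ∈ FB, cB e})
        (sInf {r : ℝ | ∃ FA ⊆ EA, ∃ FB ⊆ EB,
          matchNum (sysBip (EA \ FA) (EB \ FB)) < matchNum (sysBip EA EB) ∧
          r = ∑ e ∈ FA, cA e + ∑ e ∈ FB, cB e}) := by
  classical
  rcases Nat.eq_zero_or_pos n with hn | hn
  · subst hn
    have hsc : ∀ (EA' : Finset (Fin 0 × Fin 0)) (EB' : Finset (Fin q × Fin 0)),
        StructCtrb EA' EB' := by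
      intro EA' EB'
      refine ⟨fun x => x.elim0, fun x => x.elim0, ?_, fun x => x.elim0⟩
      intro a
      exact a.elim0
    have e1 : {r : ℝ | ∃ FA ⊆ EA, ∃ FB ⊆ EB,
        ¬ StructCtrb (EA \ FA) (EB \ FB) ∧
        r = ∑ e ∈ FA, cA e + ∑ e ∈ FB, cB e} = ∅ := by
      ext r
      simp only [Set.mem_setOf_eq, Set.mem_empty_iff_false, iff_false]
      rintro ⟨FA, _, FB, _, h, _⟩
      exact h (hsc _ _)
    have e2 : {r : ℝ | ∃ FA ⊆ EA, ∃ FB ⊆ EB,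
        ¬ InputReachable (EA \ FA) (EB \ FB) ∧
        r = ∑ e ∈ FA, cA e + ∑ e ∈ FB, cB e} = ∅ := by
      ext r
      simp only [Set.mem_setOf_eq, Set.mem_empty_iff_false, iff_false]
      rintro ⟨FA, _, FB, _, h, _⟩
      exact h (fun x => x.elim0)
    have e3 : {r : ℝ | ∃ FA ⊆ EA, ∃ FB ⊆ EB,
        matchNum (sysBip (EA \ FA) (EB \ FB)) < matchNum (sysBip EA EB) ∧
        r = ∑ e ∈ FA, cA e + ∑ e ∈ FB, cB e} = ∅ := by
      ext r
      simp only [Set.mem_setOf_eq, Set.mem_empty_iff_false, iff_false]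
      rintro ⟨FA, _, FB, _, h, _⟩
      exact absurd (lt_of_lt_of_le h (matchNum_le _)) (Nat.not_lt_zero _)
    rw [e1, e2, e3, Real.sInf_empty, min_self]
  · have hfull : matchNum (sysBip EA EB) = n := (sat_iff EA EB).mp hctrb.2
    have hSeq : {r : ℝ | ∃ FA ⊆ EA, ∃ FB ⊆ EB,
        ¬ StructCtrb (EA \ FA) (EB \ FB) ∧
        r = ∑ e ∈ FA, cA e + ∑ e ∈ FB, cB e}
        = {r : ℝ | ∃ FA ⊆ EA, ∃ FB ⊆ EB,
          ¬ InputReachable (EA \ FA) (EB \ FB) ∧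
          r = ∑ e ∈ FA, cA e + ∑ e ∈ FB, cB e}
        ∪ {r : ℝ | ∃ FA ⊆ EA, ∃ FB ⊆ EB,
          matchNum (sysBip (EA \ FA) (EB \ FB)) < matchNum (sysBip EA EB) ∧
          r = ∑ e ∈ FA, cA e + ∑ e ∈ FB, cB e} := by
      ext r
      simp only [Set.mem_setOf_eq, Set.mem_union]
      constructor
      · rintro ⟨FA, hFA, FB, hFB, h, rfl⟩
        rw [StructCtrb, not_and_or] at h
        rcases h with h | h
        · exact Or.inl ⟨FA, hFA, FB, hFB, h, rfl⟩
        · refine Or.inr ⟨FA, hFA, FB, hFB, ?_, rfl⟩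
          rw [hfull]
          exact lt_of_le_of_ne (matchNum_le _) (fun hc => h ((sat_iff _ _).mpr hc))
      · rintro (⟨FA, hFA, FB, hFB, h, rfl⟩ | ⟨FA, hFA, FB, hFB, h, rfl⟩)
        · exact ⟨FA, hFA, FB, hFB, fun hc => h hc.1, rfl⟩
        · refine ⟨FA, hFA, FB, hFB, fun hc => ?_, rfl⟩
          rw [hfull] at h
          exact absurd ((sat_iff _ _).mp hc.2) h.ne
    rw [hSeq]
    have hb1 : BddBelow {r : ℝ | ∃ FA ⊆ EA, ∃ FB ⊆ EB,
        ¬ InputReachable (EA \ FA) (EB \ FB) ∧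
        r = ∑ e ∈ FA, cA e + ∑ e ∈ FB, cB e} := by
      refine ⟨0, ?_⟩
      rintro r ⟨FA, hFA, FB, hFB, _, rfl⟩
      exact add_nonneg (Finset.sum_nonneg fun e he => (hcA e (hFA he)).le)
        (Finset.sum_nonneg fun e he => (hcB e (hFB he)).le)
    have hb2 : BddBelow {r : ℝ | ∃ FA ⊆ EA, ∃ FB ⊆ EB,
        matchNum (sysBip (EA \ FA) (EB \ FB)) < matchNum (sysBip EA EB) ∧
        r = ∑ e ∈ FA, cA e + ∑ e ∈ FB, cB e} := by
      refine ⟨0, ?_⟩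
      rintro r ⟨FA, hFA, FB, hFB, _, rfl⟩
      exact add_nonneg (Finset.sum_nonneg fun e he => (hcA e (hFA he)).le)
        (Finset.sum_nonneg fun e he => (hcB e (hFB he)).le)
    have hn1 : Set.Nonempty {r : ℝ | ∃ FA ⊆ EA, ∃ FB ⊆ EB,
        ¬ InputReachable (EA \ FA) (EB \ FB) ∧
        r = ∑ e ∈ FA, cA e + ∑ e ∈ FB, cB e} := by
      refine ⟨∑ e ∈ EA, cA e + ∑ e ∈ EB, cB e,
        EA, Finset.Subset.refl _, EB, Finset.Subset.refl _, ?_, rfl⟩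
      simp only [Finset.sdiff_self]
      exact not_IR_empty hn
    have hn2 : Set.Nonempty {r : ℝ | ∃ FA ⊆ EA, ∃ FB ⊆ EB,
        matchNum (sysBip (EA \ FA) (EB \ FB)) < matchNum (sysBip EA EB) ∧
        r = ∑ e ∈ FA, cA e + ∑ e ∈ FB, cB e} := by
      refine ⟨∑ e ∈ EA, cA e + ∑ e ∈ EB, cB e,
        EA, Finset.Subset.refl _, EB, Finset.Subset.refl _, ?_, rfl⟩
      have hemp : sysBip (EA \ EA) (EB \ EB) = ∅ := by
        simp [sysBip]
      rw [hemp, matchNum_empty, hfull]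
      exact hn
    rw [csInf_union hb1 hn1 hb2 hn2]
end

section
/- Let (A,B) be the structured system with A = 0_{n×n}, B encoding a bipartite graph B(S_1,S_2,E) with a perfect matching (B_{ij} = 1 iff (s_j,s_i) ∈ E), all edges having unit cost. Then the minimum number of edges whose deletion makes (A,B) structurally uncontrollable equals the matching preclusion number of B(S_1,S_2,E). -/
/-- The bipartite edge set `E` (inputs versus states) has a perfect
matching. -/
def HasPerfectMatching {n : ℕ} (E : Finset (Fin n × Fin n)) : Prop :=
  ∃ f : Fin n → Fin n, Function.Bijective f ∧ ∀ i, (f i, i) ∈ E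

lemma structCtrb_iff_hpm {n : ℕ} (EB : Finset (Fin n × Fin n)) :
    StructCtrb (∅ : Finset (Fin n × Fin n)) EB ↔ HasPerfectMatching EB := by
  constructor
  · rintro ⟨-, f, hfinj, hf⟩
    have hex : ∀ x : Fin n, ∃ u : Fin n, f x = Sum.inl u ∧ (u, x) ∈ EB := by
      intro x
      have := hf x
      simp only [sysBip, Finset.mem_union, Finset.mem_image, Finset.notMem_empty] at this
      rcases this with ⟨e, he, heq⟩ | ⟨e, he, heq⟩
      · obtain ⟨h1, h2⟩ := Prod.mk.injEq .. |>.mp heq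
        exact ⟨e.1, h1.symm, by rw [← h2]; exact he⟩
      · exact he.elim
    choose g hg1 hg2 using hex
    have hginj : Function.Injective g := by
      intro a b hab
      apply hfinj
      rw [hg1 a, hg1 b, hab]
    exact ⟨g, Finite.injective_iff_bijective.mp hginj, hg2⟩
  · rintro ⟨g, hgbij, hg⟩
    refine ⟨fun x => ⟨g x, Relation.ReflTransGen.single ?_⟩,
      fun x => Sum.inl (g x), fun a b hab => hgbij.1 (Sum.inl_injective hab), fun x => ?_⟩
    · exact hg x
    · simp only [sysBip, Finset.mem_union, Finset.mem_image]
      exact Or.inl ⟨(g x, x), hg x, rfl⟩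

/-- For the structured system `(A, B)` with `A = 0` and input edges given by
a bipartite graph `E` (with `|S₁| = |S₂| = n`) having a perfect matching and
unit edge costs, the minimum number of edges whose deletion destroys
structural controllability equals the matching preclusion number of `E`. -/
theorem stmt8 {n : ℕ} (E : Finset (Fin n × Fin n))
    (hpm : HasPerfectMatching E) :
    sInf {k : ℕ | ∃ F ⊆ E, ¬ StructCtrb (∅ : Finset (Fin n × Fin n)) (E \ F) ∧ k = F.card}
      = sInf {k : ℕ | ∃ F ⊆ E, ¬ HasPerfectMatching (E \ F) ∧ k = F.card} := by
  congr 1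
  ext k
  simp only [Set.mem_setOf_eq, structCtrb_iff_hpm]
end

section
/- Let (A, B) be structurally controllable with every state vertex having a self-loop in A. Let N_1, ..., N_l be the source strongly connected components of D(A), and for each i let c_i^u be the total cost of inputs that have an edge into N_i. Then the minimum cost of a set of inputs whose deletion makes (A, B_{S\J_c}) structurally uncontrollable equals min_{1≤i≤l} c_i^u. -/
attribute [local instance] Classical.propDecidable

/-- Reachability in the state digraph `D(A)`. -/
def stReach {n : ℕ} (EA : Finset (Fin n × Fin n)) (x y : Fin n) : Prop :=
  Relation.ReflTransGen (fun a b => (a, b) ∈ EA) x y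

/-- `x` lies in a source SCC of `D(A)`: every vertex from which `x` is
reachable is also reachable from `x`. -/
def InSourceSCC {n : ℕ} (EA : Finset (Fin n × Fin n)) (x : Fin n) : Prop :=
  ∀ y, stReach EA y x → stReach EA x y

/-- The total cost of the inputs with an edge into the SCC of `x`. -/
noncomputable def sccInputCost {n q : ℕ} (EA : Finset (Fin n × Fin n))
    (EB : Finset (Fin q × Fin n)) (c : Fin q → ℝ) (x : Fin n) : ℝ :=
  ∑ j ∈ Finset.univ.filter
      (fun u : Fin q => ∃ y, stReach EA x y ∧ stReach EA y x ∧ (u, y) ∈ EB), c j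

lemma satMatch {n q : ℕ} (EA : Finset (Fin n × Fin n)) (EB : Finset (Fin q × Fin n))
    (hself : ∀ i : Fin n, (i, i) ∈ EA) : SaturatingMatching EA EB := by
  refine ⟨Sum.inr, fun a b h => Sum.inr.inj h, fun x => ?_⟩
  exact Finset.mem_union_right _ (Finset.mem_image.2 ⟨(x, x), hself x, rfl⟩)

lemma lift_path {n q : ℕ} (EA : Finset (Fin n × Fin n)) (EB : Finset (Fin q × Fin n))
    {y z : Fin n} (h : stReach EA y z) :
    Relation.ReflTransGen (sysAdj EA EB) (Sum.inr y) (Sum.inr z) := by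
  induction h with
  | refl => exact .refl
  | tail _ hbc ih => exact ih.tail hbc

lemma extract_path {n q : ℕ} (EA : Finset (Fin n × Fin n)) (EB' : Finset (Fin q × Fin n))
    {u : Fin q} {v : Fin q ⊕ Fin n}
    (h : Relation.ReflTransGen (sysAdj EA EB') (Sum.inl u) v) :
    v = Sum.inl u ∨ ∃ y w, (u, y) ∈ EB' ∧ v = Sum.inr w ∧ stReach EA y w := by
  induction h with
  | refl => exact Or.inl rfl
  | @tail b c _ hbc ih =>
    rcases ih with rfl | ⟨y, w, hy, rfl, hyw⟩
    · cases c with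
      | inl u' => simp [sysAdj] at hbc
      | inr y => exact Or.inr ⟨y, y, hbc, rfl, .refl⟩
    · cases c with
      | inl u' => simp [sysAdj] at hbc
      | inr w' => exact Or.inr ⟨y, w', hy, rfl, hyw.tail hbc⟩

lemma exists_sourceSCC {n : ℕ} (EA : Finset (Fin n × Fin n)) (z : Fin n) :
    ∃ x, InSourceSCC EA x ∧ stReach EA x z := by
  classical
  set anc : Fin n → Finset (Fin n) := fun w => Finset.univ.filter (fun y => stReach EA y w)
    with hanc
  have hne : (anc z).Nonempty := ⟨z, by simp [hanc, stReach]; convert (Finset.mem_filter (p := fun y => stReach EA y z)).2 ⟨Finset.mem_univ z, (Relation.ReflTransGen.refl : stReach EA z z)⟩ <;> simp [stReach]⟩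
  obtain ⟨x, hxz, hmin⟩ := Finset.exists_min_image (anc z) (fun w => (anc w).card) hne
  have hxz' : stReach EA x z := by simpa [hanc] using hxz
  refine ⟨x, fun y hyx => ?_, hxz'⟩
  have hyz : y ∈ anc z := by
    simp only [hanc, Finset.mem_filter, Finset.mem_univ, true_and]
    exact hyx.trans hxz'
  have hsub : anc y ⊆ anc x := by
    intro a ha
    simp only [hanc, Finset.mem_filter, Finset.mem_univ, true_and] at ha ⊢
    exact ha.trans hyx
  have hcard : (anc x).card ≤ (anc y).card := hmin y hyz
  have heq : anc y = anc x := Finset.eq_of_subset_of_card_le hsub hcard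
  have : x ∈ anc y := heq ▸ (by simp [hanc, stReach]; convert (Finset.mem_filter (p := fun y => stReach EA y x)).2 ⟨Finset.mem_univ x, (Relation.ReflTransGen.refl : stReach EA x x)⟩ <;> simp [stReach] : x ∈ anc x)
  simpa [hanc] using this

/-- For a structurally controllable pair in which every state vertex has a
self-loop, the minimum cost of a set of inputs whose deletion destroys
structural controllability equals the minimum over source SCCs `N_i` of the
total cost `c_i^u` of the inputs with an edge into `N_i`. -/
theorem stmt13 {n q : ℕ} (EA : Finset (Fin n × Fin n)) (EB : Finset (Fin q × Fin n))
    (c : Fin q → ℝ) (hc : ∀ j, 0 ≤ c j)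
    (hself : ∀ i : Fin n, (i, i) ∈ EA)
    (hctrb : StructCtrb EA EB) :
    sInf {r : ℝ | ∃ Jc : Finset (Fin q),
        ¬ StructCtrb EA (EB.filter fun e => e.1 ∉ Jc) ∧ r = ∑ j ∈ Jc, c j}
      = sInf {r : ℝ | ∃ x : Fin n, InSourceSCC EA x ∧ r = sccInputCost EA EB c x} := by
  classical
  set S := {r : ℝ | ∃ Jc : Finset (Fin q),
      ¬ StructCtrb EA (EB.filter fun e => e.1 ∉ Jc) ∧ r = ∑ j ∈ Jc, c j} with hS
  set T := {r : ℝ | ∃ x : Fin n, InSourceSCC EA x ∧ r = sccInputCost EA EB c x} with hT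
  -- `T ⊆ S` : deleting all inputs into a source SCC destroys controllability.
  have hTS : T ⊆ S := by
    rintro r ⟨x, hx, rfl⟩
    refine ⟨Finset.univ.filter
      (fun u : Fin q => ∃ y, stReach EA x y ∧ stReach EA y x ∧ (u, y) ∈ EB), ?_, rfl⟩
    rintro ⟨hreach, -⟩
    obtain ⟨u, hu⟩ := hreach x
    rcases extract_path EA _ hu with h | ⟨y, w, hy, hw, hyw⟩
    · cases h
    · obtain rfl : w = x := Sum.inr.inj hw.symm
      have hyEB := (Finset.mem_filter.1 hy).1
      have hnot := (Finset.mem_filter.1 hy).2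
      exact hnot (Finset.mem_filter.2 ⟨Finset.mem_univ u, ⟨y, hx y hyw, hyw, hyEB⟩⟩)
  -- Every element of `S` dominates an element of `T`.
  have hdom : ∀ r ∈ S, ∃ t ∈ T, t ≤ r := by
    rintro r ⟨Jc, hJc, rfl⟩
    have hsat := satMatch EA (EB.filter fun e => e.1 ∉ Jc) hself
    have : ¬ InputReachable EA (EB.filter fun e => e.1 ∉ Jc) := fun h => hJc ⟨h, hsat⟩
    rw [InputReachable] at this
    push_neg at this
    obtain ⟨z, hz⟩ := this
    obtain ⟨x, hx, hxz⟩ := exists_sourceSCC EA z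
    refine ⟨sccInputCost EA EB c x, ⟨x, hx, rfl⟩, ?_⟩
    have hsub : Finset.univ.filter
        (fun u : Fin q => ∃ y, stReach EA x y ∧ stReach EA y x ∧ (u, y) ∈ EB) ⊆ Jc := by
      intro u hu
      obtain ⟨-, y, hxy, hyx, huy⟩ := Finset.mem_filter.1 hu
      by_contra huJ
      have huy' : (u, y) ∈ EB.filter (fun e => e.1 ∉ Jc) :=
        Finset.mem_filter.2 ⟨huy, huJ⟩
      have hpath : Relation.ReflTransGen (sysAdj EA (EB.filter fun e => e.1 ∉ Jc))
          (Sum.inl u) (Sum.inr z) :=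
        (Relation.ReflTransGen.single (show sysAdj EA _ (Sum.inl u) (Sum.inr y) from huy')).trans
          (lift_path EA _ (hyx.trans hxz))
      exact hz u hpath
    exact Finset.sum_le_sum_of_subset_of_nonneg hsub (fun j _ _ => hc j)
  -- Trivial case `n = 0`: both sets are empty.
  rcases Nat.eq_zero_or_pos n with hn | hn
  · subst hn
    have hSempty : S = ∅ := by
      ext r
      simp only [hS, Set.mem_setOf_eq, Set.mem_empty_iff_false, iff_false]
      rintro ⟨Jc, hJc, -⟩
      exact hJc ⟨fun x => x.elim0, satMatch _ _ hself⟩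
    have hTempty : T = ∅ := by
      ext r
      simp only [hT, Set.mem_setOf_eq, Set.mem_empty_iff_false, iff_false]
      rintro ⟨x, -⟩
      exact x.elim0
    rw [hSempty, hTempty]
  · -- `n > 0`: both sets are nonempty and bounded below by 0.
    have hTne : T.Nonempty := by
      obtain ⟨x, hx, -⟩ := exists_sourceSCC EA ⟨0, hn⟩
      exact ⟨_, x, hx, rfl⟩
    have hSne : S.Nonempty := hTne.mono hTS
    have hSbdd : BddBelow S := by
      refine ⟨0, ?_⟩
      rintro r ⟨Jc, -, rfl⟩
      exact Finset.sum_nonneg fun j _ => hc j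
    have hTbdd : BddBelow T := by
      refine ⟨0, ?_⟩
      rintro r ⟨x, -, rfl⟩
      exact Finset.sum_nonneg fun j _ => hc j
    refine le_antisymm (csInf_le_csInf hSbdd hTne hTS) (le_csInf hSne ?_)
    intro r hr
    obtain ⟨t, htT, htr⟩ := hdom r hr
    exact le_trans (csInf_le hTbdd htT) htr
end

section
/- Let D(A, B) be a system digraph in which every state vertex is input-reachable. A state vertex x is input-unreachable in D(A, B_{S\J_c}) (after deleting the inputs in J_c) for some x if and only if there exists a source SCC N_i of D(A) all of whose in-neighbor inputs lie in J_c. -/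
/-- Let `adjA` be the state digraph `D(A)` and `B` the input-to-state edges,
with every state vertex input-reachable in `D(A,B)`.  After deleting the
inputs in `J_c`, some state vertex is input-unreachable iff there is a
source SCC of `D(A)` all of whose in-neighbor inputs lie in `J_c`. -/
theorem stmt14 {n q : ℕ} (adjA : Fin n → Fin n → Prop) (B : Fin q → Fin n → Prop)
    (hreach : ∀ x : Fin n, ∃ u : Fin q, ∃ y : Fin n,
      B u y ∧ Relation.ReflTransGen adjA y x)
    (Jc : Set (Fin q)) :
    (∃ x : Fin n, ¬ ∃ u ∉ Jc, ∃ y : Fin n,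
        B u y ∧ Relation.ReflTransGen adjA y x)
      ↔ (∃ x : Fin n,
          (∀ y, Relation.ReflTransGen adjA y x → Relation.ReflTransGen adjA x y) ∧
          ∀ u : Fin q, (∃ y, Relation.ReflTransGen adjA x y ∧
              Relation.ReflTransGen adjA y x ∧ B u y) → u ∈ Jc) := by
  classical
  constructor
  · rintro ⟨x, hx⟩
    obtain ⟨z, hzS, hzmin⟩ := Finset.exists_min_image
      (Finset.univ.filter (fun y => Relation.ReflTransGen adjA y x))
      (fun z => (Finset.univ.filter (fun w => Relation.ReflTransGen adjA w z)).card)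
      ⟨x, Finset.mem_filter.mpr ⟨Finset.mem_univ x, Relation.ReflTransGen.refl⟩⟩
    simp only [Finset.mem_filter, Finset.mem_univ, true_and] at hzS
    refine ⟨z, ?_, ?_⟩
    · intro y hyz
      have hsub : (Finset.univ.filter fun w => Relation.ReflTransGen adjA w y) ⊆
          (Finset.univ.filter fun w => Relation.ReflTransGen adjA w z) := by
        intro w hw
        simp only [Finset.mem_filter, Finset.mem_univ, true_and] at hw ⊢
        exact hw.trans hyz
      have hle := hzmin y (by
        simp only [Finset.mem_filter, Finset.mem_univ, true_and]
        exact hyz.trans hzS)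
      have heq := Finset.eq_of_subset_of_card_le hsub hle
      have hz : z ∈ Finset.univ.filter fun w => Relation.ReflTransGen adjA w y := by
        rw [heq]
        exact Finset.mem_filter.mpr ⟨Finset.mem_univ z, Relation.ReflTransGen.refl⟩
      simpa using hz
    · intro u ⟨y, hzy, hyz, hBy⟩
      by_contra hu
      exact hx ⟨u, hu, y, hBy, hyz.trans hzS⟩
  · rintro ⟨x, hsrc, hin⟩
    refine ⟨x, ?_⟩
    rintro ⟨u, hu, y, hBy, hyx⟩
    exact hu (hin u ⟨y, hsrc y hyx, hyx, hBy⟩)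
end

section
/- Let B ∈ {0,1}^{(m+1)×(m+1)} have exactly one nonzero per column (B = I_{m+1}) and let A ∈ {0,1}^{(m+1)×(m+1)}. Fix J_c ⊆ {1,...,m}. If every state vertex remains input-reachable after deleting inputs J_c, then grank([A, B_{S_+\J_c}]) < m+1 if and only if grank(A_{J_c, S}) < |J_c|, where A_{J_c,S} is the submatrix of A with rows indexed by J_c (all columns S = {1,...,m+1}). -/
/-- The generic rank of a structured matrix with zero–nonzero pattern `M`:
the maximum matching number of the bipartite row–column graph with edges at
the nonzero positions. -/
noncomputable def grank {α β : Type*} (M : α → β → Prop) : ℕ :=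
  sSup {k | ∃ (f : Fin k → α) (g : Fin k → β),
    Function.Injective f ∧ Function.Injective g ∧ ∀ i, M (f i) (g i)}

/-- Auxiliary: the set whose supremum is `grank`. -/
def grankSet {α β : Type*} (M : α → β → Prop) : Set ℕ :=
  {k | ∃ (f : Fin k → α) (g : Fin k → β),
    Function.Injective f ∧ Function.Injective g ∧ ∀ i, M (f i) (g i)}

lemma zero_mem_grankSet {α β : Type*} (M : α → β → Prop) : 0 ∈ grankSet M :=
  ⟨Fin.elim0, Fin.elim0, fun i => i.elim0, fun i => i.elim0, fun i => i.elim0⟩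

lemma mem_grankSet_of_le {α β : Type*} (M : α → β → Prop) {k k' : ℕ} (h : k' ≤ k)
    (hk : k ∈ grankSet M) : k' ∈ grankSet M := by
  obtain ⟨f, g, hf, hg, hM⟩ := hk
  exact ⟨f ∘ Fin.castLE h, g ∘ Fin.castLE h,
    hf.comp (Fin.castLE_injective h), hg.comp (Fin.castLE_injective h),
    fun i => hM _⟩

lemma sSup_grankSet_lt_iff {α β : Type*} (M : α → β → Prop)
    (hb : BddAbove (grankSet M)) (n : ℕ) :
    sSup (grankSet M) < n ↔ n ∉ grankSet M := by
  rcases Nat.eq_zero_or_pos n with rfl | hn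
  · simp [zero_mem_grankSet]
  · constructor
    · intro h hmem
      have := le_csSup hb hmem
      omega
    · intro h
      have hall : ∀ k ∈ grankSet M, k ≤ n - 1 := by
        intro k hk
        by_contra hle
        exact h (mem_grankSet_of_le M (by omega) hk)
      have : sSup (grankSet M) ≤ n - 1 := csSup_le ⟨0, zero_mem_grankSet M⟩ hall
      omega

/-- With `B = I_{m+1}` (one nonzero per column) and `J_c ⊆ {1,…,m}`, if every
state vertex remains input-reachable after deleting the inputs in `J_c`, then
`grank [A, B_{S₊∖J_c}] < m+1` iff `grank A_{J_c,S} < |J_c|`. -/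
theorem stmt15 {m : ℕ} (A : Fin (m + 1) → Fin (m + 1) → Bool)
    (Jc : Finset (Fin (m + 1))) (hJc : Fin.last m ∉ Jc)
    (hreach : ∀ x : Fin (m + 1), ∃ u ∉ Jc,
      Relation.ReflTransGen (fun i j : Fin (m + 1) => A j i = true) u x) :
    (grank (fun (i : Fin (m + 1)) (j : Fin (m + 1) ⊕ {j : Fin (m + 1) // j ∉ Jc}) =>
        Sum.elim (fun j => A i j = true) (fun j => i = j.val) j) < m + 1)
      ↔ grank (fun (i : {i : Fin (m + 1) // i ∈ Jc}) (j : Fin (m + 1)) =>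
          A i.val j = true) < Jc.card := by
  set Mbig : Fin (m + 1) → (Fin (m + 1) ⊕ {j : Fin (m + 1) // j ∉ Jc}) → Prop :=
    fun i j => Sum.elim (fun j => A i j = true) (fun j => i = j.val) j with hMbig
  set Msub : {i : Fin (m + 1) // i ∈ Jc} → Fin (m + 1) → Prop :=
    fun i j => A i.val j = true with hMsub
  have hbbig : BddAbove (grankSet Mbig) := by
    refine ⟨m + 1, fun k hk => ?_⟩
    obtain ⟨f, _, hf, _, _⟩ := hk
    simpa using Fintype.card_le_of_injective f hf
  have hbsub : BddAbove (grankSet Msub) := by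
    refine ⟨Jc.card, fun k hk => ?_⟩
    obtain ⟨f, _, hf, _, _⟩ := hk
    simpa using Fintype.card_le_of_injective f hf
  have hgb : grank Mbig < m + 1 ↔ (m + 1) ∉ grankSet Mbig :=
    sSup_grankSet_lt_iff Mbig hbbig (m + 1)
  have hgs : grank Msub < Jc.card ↔ Jc.card ∉ grankSet Msub :=
    sSup_grankSet_lt_iff Msub hbsub Jc.card
  rw [hgb, hgs]
  apply not_congr
  constructor
  · -- big perfect matching → submatching of size Jc.card
    rintro ⟨f, g, hf, hg, hM⟩
    have hfb : Function.Bijective f := Finite.injective_iff_bijective.mp hf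
    set ef := Equiv.ofBijective f hfb with hef
    set e : Fin Jc.card ≃ {i : Fin (m+1) // i ∈ Jc} := Jc.equivFin.symm with he
    have key : ∀ k : Fin Jc.card, ∃ j : Fin (m+1),
        g (ef.symm (e k).val) = Sum.inl j := by
      intro k
      have hfval : f (ef.symm (e k).val) = (e k).val := ef.apply_symm_apply _
      have hprop := hM (ef.symm (e k).val)
      rcases hval : g (ef.symm (e k).val) with j | j
      · exact ⟨j, rfl⟩
      · rw [hval, hfval] at hprop
        simp only [hMbig, Sum.elim_inr] at hprop
        exact absurd (hprop ▸ (e k).2) j.2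
    choose G hG using key
    refine ⟨fun k => e k, G,
      fun a b hab => e.injective (Subtype.ext (by exact congrArg Subtype.val hab)), ?_, ?_⟩
    · intro a b hab
      have : g (ef.symm (e a).val) = g (ef.symm (e b).val) := by
        rw [hG a, hG b, hab]
      have := ef.symm.injective (hg this)
      exact e.injective (Subtype.ext this)
    · intro k
      have hfval : f (ef.symm (e k).val) = (e k).val := ef.apply_symm_apply _
      have hprop := hM (ef.symm (e k).val)
      rw [hG k, hfval] at hprop
      simpa [hMsub, hMbig] using hprop
  · -- submatching of size Jc.card → big perfect matching
    rintro ⟨f, g, hf, hg, hA⟩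
    have hfb : Function.Bijective f := by
      rw [Fintype.bijective_iff_injective_and_card]
      exact ⟨hf, by simp⟩
    set ef := Equiv.ofBijective f hfb with hef
    refine ⟨id, fun i => if h : i ∈ Jc then Sum.inl (g (ef.symm ⟨i, h⟩))
        else Sum.inr ⟨i, h⟩, Function.injective_id, ?_, ?_⟩
    · intro a b hab
      by_cases ha : a ∈ Jc <;> by_cases hb : b ∈ Jc <;> simp [ha, hb] at hab
      · have := ef.symm.injective (hg hab)
        exact congrArg Subtype.val this
      · exact hab
    · intro i
      by_cases h : i ∈ Jc
      · have hfval : f (ef.symm ⟨i, h⟩) = ⟨i, h⟩ := ef.apply_symm_apply _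
        have := hA (ef.symm ⟨i, h⟩)
        rw [hfval] at this
        simpa [hMbig, h] using this
      · simp [hMbig, h]
end
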